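/- Let b : ℝ → ℝ be monotone (nondecreasing) and Lipschitz continuous with Lipschitz constant L. Then for all p, q ∈ ℝ, (b(p) − b(q))² ≤ 2L · |∫_p^q (b(s) − b(p)) ds|. -/

import Mathlib

/-- Auxiliary: the case `p ≤ q`, `0 < L`, without absolute value. -/
lemma monotone_lipschitz_sq_le_aux (b : ℝ → ℝ) (L : ℝ) (hL : 0 < L)
    (hmono : Monotone b)
    (hlip : ∀ x y, |b x - b y| ≤ L * |x - y|)
    (p q : ℝ) (hpq : p ≤ q) :
    (b q - b p) ^ 2 ≤ 2 * L * ∫ s in p..q, (b s - b p) := by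
  set c : ℝ := b q - b p with hc
  have hc0 : 0 ≤ c := sub_nonneg.2 (hmono hpq)
  set δ : ℝ := c / L with hδ
  have hδ0 : 0 ≤ δ := div_nonneg hc0 hL.le
  have hcL : c ≤ L * (q - p) := by
    have := hlip q p
    rw [abs_of_nonneg hc0, abs_of_nonneg (sub_nonneg.2 hpq)] at this
    exact this
  have hδle : δ ≤ q - p := (div_le_iff₀' hL).2 hcL
  have ha : p ≤ q - δ := by linarith
  have hb : q - δ ≤ q := by linarith
  -- integrability
  have hint : ∀ u v : ℝ, IntervalIntegrable (fun s => b s - b p) MeasureTheory.volume u v := by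
    intro u v
    exact (hmono.intervalIntegrable).sub intervalIntegrable_const
  -- split the integral
  have hsplit : ∫ s in p..q, (b s - b p)
      = (∫ s in p..(q - δ), (b s - b p)) + ∫ s in (q - δ)..q, (b s - b p) :=
    (intervalIntegral.integral_add_adjacent_intervals (hint p (q - δ)) (hint (q - δ) q)).symm
  have h1 : 0 ≤ ∫ s in p..(q - δ), (b s - b p) := by
    apply intervalIntegral.integral_nonneg ha
    intro s hs
    exact sub_nonneg.2 (hmono hs.1)
  have h2 : ∫ s in (q - δ)..q, L * (s - (q - δ)) ≤ ∫ s in (q - δ)..q, (b s - b p) := by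
    apply intervalIntegral.integral_mono_on hb
    · exact ((continuous_const.mul (continuous_id.sub continuous_const)).intervalIntegrable _ _ :
        IntervalIntegrable (fun s => L * (s - (q - δ))) MeasureTheory.volume _ _)
    · exact hint (q - δ) q
    · intro s hs
      have hsq : s ≤ q := hs.2
      have := hlip q s
      rw [abs_of_nonneg (sub_nonneg.2 (hmono hsq)), abs_of_nonneg (sub_nonneg.2 hsq)] at this
      have hcδ : c = L * δ := by rw [hδ, mul_div_assoc', eq_div_iff hL.ne']; ring
      nlinarith [this]
  have h3 : ∫ s in (q - δ)..q, L * (s - (q - δ)) = L * δ ^ 2 / 2 := by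
    have e : ∀ s : ℝ, L * (s - (q - δ)) = L * s - L * (q - δ) := fun s => by ring
    simp only [e]
    rw [intervalIntegral.integral_sub (f := fun s => L * s) (g := fun _ => L * (q - δ))
          ((continuous_const.mul continuous_id').intervalIntegrable _ _ :
            IntervalIntegrable (fun s => L * s) MeasureTheory.volume _ _)
          intervalIntegrable_const,
        intervalIntegral.integral_const_mul, integral_id,
        intervalIntegral.integral_const]
    simp only [smul_eq_mul]
    ring
  have hcδ : c = L * δ := by rw [hδ, mul_div_assoc', eq_div_iff hL.ne']; ring
  have key : L * δ ^ 2 / 2 ≤ ∫ s in p..q, (b s - b p) := by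
    rw [hsplit]; linarith
  calc (b q - b p) ^ 2 = c ^ 2 := by rw [hc]
    _ = 2 * L * (L * δ ^ 2 / 2) := by rw [hcδ]; ring
    _ ≤ 2 * L * ∫ s in p..q, (b s - b p) := by
        apply mul_le_mul_of_nonneg_left key (by linarith)

/-- Technical lemma (cf. Eymard–Gallouët–Herbin, Lemma 4.5): for a nondecreasing,
`L`-Lipschitz function `b`, `(b p − b q)² ≤ 2 L |∫_p^q (b s − b p) ds|`. -/
theorem monotone_lipschitz_sq_le (b : ℝ → ℝ) (L : ℝ) (hL : 0 ≤ L)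
    (hmono : Monotone b)
    (hlip : ∀ x y, |b x - b y| ≤ L * |x - y|)
    (p q : ℝ) :
    (b p - b q) ^ 2 ≤ 2 * L * |∫ s in p..q, (b s - b p)| := by
  rcases hL.eq_or_lt with hL0 | hLpos
  · -- L = 0 : b is constant
    have h := hlip p q
    rw [← hL0] at h
    simp only [zero_mul] at h
    have : b p - b q = 0 := abs_nonpos_iff.1 h
    rw [this, ← hL0]
    simp
  · -- L > 0
    have main : (b p - b q) ^ 2 ≤ 2 * L * ∫ s in p..q, (b s - b p) := by
      rcases le_total p q with hpq | hqp
      · have := monotone_lipschitz_sq_le_aux b L hLpos hmono hlip p q hpq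
        calc (b p - b q) ^ 2 = (b q - b p) ^ 2 := by ring
          _ ≤ _ := this
      · -- apply the aux lemma to the reflected function
        set B : ℝ → ℝ := fun x => -b (p + q - x) with hB
        have hBmono : Monotone B := by
          intro x y hxy
          simp only [hB, neg_le_neg_iff]
          exact hmono (by linarith)
        have hBlip : ∀ x y, |B x - B y| ≤ L * |x - y| := by
          intro x y
          simp only [hB]
          have := hlip (p + q - y) (p + q - x)
          calc |-b (p + q - x) - -b (p + q - y)| = |b (p + q - y) - b (p + q - x)| := by
                congr 1; ring
            _ ≤ L * |(p + q - y) - (p + q - x)| := this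
            _ = L * |x - y| := by congr 1; ring
        have haux := monotone_lipschitz_sq_le_aux B L hLpos hBmono hBlip q p hqp
        have hBval : (B p - B q) ^ 2 = (b p - b q) ^ 2 := by
          simp only [hB]
          ring_nf
        have hintegrand : ∀ s : ℝ, B s - B q = b p - b (p + q - s) := by
          intro s; simp only [hB]; ring_nf
        have hInt : ∫ s in q..p, (B s - B q) = ∫ s in p..q, (b s - b p) := by
          calc ∫ s in q..p, (B s - B q) = ∫ s in q..p, (b p - b (p + q - s)) := by
                simp only [hintegrand]
            _ = ∫ s in (p + q - p)..(p + q - q), (b p - b s) :=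
                intervalIntegral.integral_comp_sub_left (fun s => b p - b s) (p + q)
            _ = ∫ s in q..p, (b p - b s) := by norm_num
            _ = ∫ s in p..q, (b s - b p) := by
                rw [intervalIntegral.integral_symm]
                rw [← intervalIntegral.integral_neg]
                congr 1; funext s; ring
        rw [hBval, hInt] at haux
        exact haux
    calc (b p - b q) ^ 2 ≤ 2 * L * ∫ s in p..q, (b s - b p) := main
      _ ≤ 2 * L * |∫ s in p..q, (b s - b p)| := by
          apply mul_le_mul_of_nonneg_left (le_abs_self _) (by linarith)
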